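/- Under the standing assumptions on the coefficients (Lipschitz γ_α, μ_α, H functions with γ_α(0)=0, positive rates), the initial value problem for the three-dimensional tumor–host–matrix ODE system admits a unique global solution φ ∈ C([0,∞); ℝ³) for every initial datum φ⁰ ≥ 0 with ‖φ⁰‖₁ ≤ 1, and this solution satisfies φ(t) ≥ 0 and ‖φ(t)‖₁ ≤ 1 for all t ≥ 0. -/

import Mathlib

open Set Metric Real

namespace THM

abbrev E3 := ℝ × ℝ × ℝ

lemma dist1 (x y : E3) : |x.1 - y.1| ≤ dist x y := by
  rw [← Real.dist_eq]; rw [Prod.dist_eq]; exact le_max_left _ _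

lemma dist2 (x y : E3) : |x.2.1 - y.2.1| ≤ dist x y := by
  rw [← Real.dist_eq, Prod.dist_eq]
  exact le_trans (by rw [Prod.dist_eq]; exact le_max_left _ _) (le_max_right _ _)

lemma dist3 (x y : E3) : |x.2.2 - y.2.2| ≤ dist x y := by
  rw [← Real.dist_eq, Prod.dist_eq]
  exact le_trans (by rw [Prod.dist_eq]; exact le_max_right _ _) (le_max_right _ _)

/-- Bounded and Lipschitz on a set. -/
def LipBOn (s : Set E3) (f : E3 → ℝ) : Prop :=
  ∃ K C : ℝ, 0 ≤ K ∧ (∀ x ∈ s, |f x| ≤ C) ∧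
    (∀ x ∈ s, ∀ y ∈ s, |f x - f y| ≤ K * dist x y)

namespace LipBOn

lemma const (s : Set E3) (c : ℝ) : LipBOn s (fun _ => c) :=
  ⟨0, |c|, le_rfl, fun _ _ => le_rfl, by simp⟩

lemma add {s f g} (hf : LipBOn s f) (hg : LipBOn s g) :
    LipBOn s (fun x => f x + g x) := by
  obtain ⟨K₁, C₁, hK₁, hB₁, hL₁⟩ := hf
  obtain ⟨K₂, C₂, hK₂, hB₂, hL₂⟩ := hg
  refine ⟨K₁ + K₂, C₁ + C₂, by linarith, fun x hx => ?_, fun x hx y hy => ?_⟩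
  · calc |f x + g x| ≤ |f x| + |g x| := abs_add_le _ _
      _ ≤ C₁ + C₂ := add_le_add (hB₁ x hx) (hB₂ x hx)
  · calc |f x + g x - (f y + g y)| = |(f x - f y) + (g x - g y)| := by ring_nf
      _ ≤ |f x - f y| + |g x - g y| := abs_add_le _ _
      _ ≤ K₁ * dist x y + K₂ * dist x y := add_le_add (hL₁ x hx y hy) (hL₂ x hx y hy)
      _ = (K₁ + K₂) * dist x y := by ring

lemma neg {s f} (hf : LipBOn s f) : LipBOn s (fun x => -f x) := by
  obtain ⟨K, C, hK, hB, hL⟩ := hf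
  exact ⟨K, C, hK, fun x hx => by simpa using hB x hx,
    fun x hx y hy => by rw [show -f x - -f y = -(f x - f y) by ring, abs_neg]; exact hL x hx y hy⟩

lemma sub {s f g} (hf : LipBOn s f) (hg : LipBOn s g) :
    LipBOn s (fun x => f x - g x) := by
  simpa [sub_eq_add_neg] using hf.add hg.neg

lemma mul {s f g} (hf : LipBOn s f) (hg : LipBOn s g) :
    LipBOn s (fun x => f x * g x) := by
  obtain ⟨K₁, C₁, hK₁, hB₁, hL₁⟩ := hf
  obtain ⟨K₂, C₂, hK₂, hB₂, hL₂⟩ := hg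
  have hC₁ : ∀ x ∈ s, (0:ℝ) ≤ C₁ := fun x hx => le_trans (abs_nonneg _) (hB₁ x hx)
  refine ⟨|C₁| * K₂ + |C₂| * K₁, C₁ * C₂, by positivity, fun x hx => ?_, fun x hx y hy => ?_⟩
  · calc |f x * g x| = |f x| * |g x| := abs_mul _ _
      _ ≤ C₁ * C₂ := mul_le_mul (hB₁ x hx) (hB₂ x hx) (abs_nonneg _) (hC₁ x hx)
  · calc |f x * g x - f y * g y| = |f x * (g x - g y) + g y * (f x - f y)| := by ring_nf
      _ ≤ |f x * (g x - g y)| + |g y * (f x - f y)| := abs_add_le _ _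
      _ = |f x| * |g x - g y| + |g y| * |f x - f y| := by rw [abs_mul, abs_mul]
      _ ≤ |C₁| * (K₂ * dist x y) + |C₂| * (K₁ * dist x y) := by
          apply add_le_add <;> apply mul_le_mul
          · exact le_trans (hB₁ x hx) (le_abs_self _)
          · exact hL₂ x hx y hy
          · exact abs_nonneg _
          · exact abs_nonneg _
          · exact le_trans (hB₂ y hy) (le_abs_self _)
          · exact hL₁ x hx y hy
          · exact abs_nonneg _
          · exact abs_nonneg _
      _ = (|C₁| * K₂ + |C₂| * K₁) * dist x y := by ring

lemma comp {L : NNReal} {H : ℝ → ℝ} (hH : LipschitzWith L H) {s f}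
    (hf : LipBOn s f) : LipBOn s (fun x => H (f x)) := by
  obtain ⟨K, C, hK, hB, hL⟩ := hf
  refine ⟨L * K, |H 0| + L * C, by positivity, fun x hx => ?_, fun x hx y hy => ?_⟩
  · have h1 : |H (f x) - H 0| ≤ L * |f x| := by
      simpa [Real.dist_eq] using hH.dist_le_mul (f x) 0
    have h2 : |H (f x)| ≤ |H (f x) - H 0| + |H 0| := by
      have := abs_add_le (H (f x) - H 0) (H 0); simpa using this
    have h3 : (L:ℝ) * |f x| ≤ L * C :=
      mul_le_mul_of_nonneg_left (hB x hx) (by positivity)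
    linarith
  · have e1 : |H (f x) - H (f y)| ≤ L * |f x - f y| := by
      simpa [Real.dist_eq] using hH.dist_le_mul (f x) (f y)
    have e2 : (L:ℝ) * |f x - f y| ≤ L * (K * dist x y) :=
      mul_le_mul_of_nonneg_left (hL x hx y hy) (by positivity)
    calc |H (f x) - H (f y)| ≤ (L:ℝ) * (K * dist x y) := le_trans e1 e2
      _ = L * K * dist x y := by ring

end LipBOn

/-- clamp to [0,1] -/
noncomputable def cl (x : ℝ) : ℝ := max 0 (min x 1)

lemma cl_nonneg (x : ℝ) : 0 ≤ cl x := le_max_left _ _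
lemma cl_le_one (x : ℝ) : cl x ≤ 1 := max_le zero_le_one (min_le_right _ _)
lemma cl_of_nonpos {x : ℝ} (h : x ≤ 0) : cl x = 0 := by
  rw [cl, max_eq_left]; exact le_trans (min_le_left _ _) h
lemma cl_of_mem {x : ℝ} (h0 : 0 ≤ x) (h1 : x ≤ 1) : cl x = x := by
  rw [cl, min_eq_left h1, max_eq_right h0]
lemma le_cl {x : ℝ} (h1 : x ≤ 1) : x ≤ cl x := by
  rw [cl, min_eq_left h1]; exact le_max_right _ _
lemma cl_of_gt_one {x : ℝ} (h : 1 < x) : cl x = 1 := by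
  rw [cl, min_eq_right h.le, max_eq_right zero_le_one]
lemma cl_lip (a b : ℝ) : |cl a - cl b| ≤ |a - b| := by
  refine le_trans (abs_max_sub_max_le_max 0 (min a 1) 0 (min b 1)) ?_
  refine max_le (by simp) ?_
  refine le_trans (abs_min_sub_min_le_max a 1 b 1) ?_
  exact max_le le_rfl (by simp)

lemma lipBOn_cl1 (s : Set E3) : LipBOn s (fun p => cl p.1) :=
  ⟨1, 1, zero_le_one, fun x _ => abs_le.2 ⟨by linarith [cl_nonneg x.1], cl_le_one _⟩,
    fun x _ y _ => by simpa using le_trans (cl_lip _ _) (dist1 x y)⟩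

lemma lipBOn_cl2 (s : Set E3) : LipBOn s (fun p => cl p.2.1) :=
  ⟨1, 1, zero_le_one, fun x _ => abs_le.2 ⟨by linarith [cl_nonneg x.2.1], cl_le_one _⟩,
    fun x _ y _ => by simpa using le_trans (cl_lip _ _) (dist2 x y)⟩

lemma lipBOn_cl3 (s : Set E3) : LipBOn s (fun p => cl p.2.2) :=
  ⟨1, 1, zero_le_one, fun x _ => abs_le.2 ⟨by linarith [cl_nonneg x.2.2], cl_le_one _⟩,
    fun x _ y _ => by simpa using le_trans (cl_lip _ _) (dist3 x y)⟩

lemma lipBOn_fst (c : E3) (r : ℝ) : LipBOn (closedBall c r) (fun p => p.1) := by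
  refine ⟨1, |c.1| + r, zero_le_one, fun x hx => ?_, fun x _ y _ => by simpa using dist1 x y⟩
  have := dist1 x c
  have hd : dist x c ≤ r := mem_closedBall.1 hx
  calc |x.1| = |(x.1 - c.1) + c.1| := by ring_nf
    _ ≤ |x.1 - c.1| + |c.1| := abs_add_le _ _
    _ ≤ |c.1| + r := by linarith

lemma lipBOn_snd1 (c : E3) (r : ℝ) : LipBOn (closedBall c r) (fun p => p.2.1) := by
  refine ⟨1, |c.2.1| + r, zero_le_one, fun x hx => ?_, fun x _ y _ => by simpa using dist2 x y⟩
  have := dist2 x c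
  have hd : dist x c ≤ r := mem_closedBall.1 hx
  calc |x.2.1| = |(x.2.1 - c.2.1) + c.2.1| := by ring_nf
    _ ≤ |x.2.1 - c.2.1| + |c.2.1| := abs_add_le _ _
    _ ≤ |c.2.1| + r := by linarith

lemma lipBOn_snd2 (c : E3) (r : ℝ) : LipBOn (closedBall c r) (fun p => p.2.2) := by
  refine ⟨1, |c.2.2| + r, zero_le_one, fun x hx => ?_, fun x _ y _ => by simpa using dist3 x y⟩
  have := dist3 x c
  have hd : dist x c ≤ r := mem_closedBall.1 hx
  calc |x.2.2| = |(x.2.2 - c.2.2) + c.2.2| := by ring_nf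
    _ ≤ |x.2.2 - c.2.2| + |c.2.2| := abs_add_le _ _
    _ ≤ |c.2.2| + r := by linarith

/-- From componentwise `LipBOn` get a Lipschitz-on-set vector field with norm bound. -/
lemma lipschitzOnWith_prod {s : Set E3} {f1 f2 f3 : E3 → ℝ}
    (h1 : LipBOn s f1) (h2 : LipBOn s f2) (h3 : LipBOn s f3) :
    ∃ (K : NNReal) (C : ℝ), 0 ≤ C ∧
      LipschitzOnWith K (fun p => (f1 p, f2 p, f3 p) : E3 → E3) s ∧
      (∀ x ∈ s, ‖((f1 x, f2 x, f3 x) : E3)‖ ≤ C) := by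
  obtain ⟨K₁, C₁, hK₁, hB₁, hL₁⟩ := h1
  obtain ⟨K₂, C₂, hK₂, hB₂, hL₂⟩ := h2
  obtain ⟨K₃, C₃, hK₃, hB₃, hL₃⟩ := h3
  set K₀ : ℝ := max K₁ (max K₂ K₃) with hK₀
  have hK₀0 : 0 ≤ K₀ := le_trans hK₁ (le_max_left _ _)
  refine ⟨K₀.toNNReal, max 0 (max C₁ (max C₂ C₃)), le_max_left _ _, ?_, fun x hx => ?_⟩
  · apply LipschitzOnWith.of_dist_le_mul
    intro x hx y hy
    rw [Real.coe_toNNReal _ hK₀0, Prod.dist_eq, Prod.dist_eq]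
    have e1 : dist (f1 x) (f1 y) ≤ K₀ * dist x y := by
      rw [Real.dist_eq]
      exact le_trans (hL₁ x hx y hy) (mul_le_mul_of_nonneg_right (le_max_left _ _) dist_nonneg)
    have e2 : dist (f2 x) (f2 y) ≤ K₀ * dist x y := by
      rw [Real.dist_eq]
      refine le_trans (hL₂ x hx y hy) (mul_le_mul_of_nonneg_right ?_ dist_nonneg)
      exact le_trans (le_max_left _ _) (le_max_right _ _)
    have e3 : dist (f3 x) (f3 y) ≤ K₀ * dist x y := by
      rw [Real.dist_eq]
      refine le_trans (hL₃ x hx y hy) (mul_le_mul_of_nonneg_right ?_ dist_nonneg)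
      exact le_trans (le_max_right _ _) (le_max_right _ _)
    exact max_le e1 (max_le e2 e3)
  · rw [Prod.norm_def, Prod.norm_def]
    have e1 : ‖f1 x‖ ≤ max 0 (max C₁ (max C₂ C₃)) :=
      le_trans (hB₁ x hx) (le_trans (le_max_left _ _) (le_max_right _ _))
    have e2 : ‖f2 x‖ ≤ max 0 (max C₁ (max C₂ C₃)) :=
      le_trans (hB₂ x hx)
        (le_trans (le_trans (le_max_left _ _) (le_max_right _ _)) (le_max_right _ _))
    have e3 : ‖f3 x‖ ≤ max 0 (max C₁ (max C₂ C₃)) :=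
      le_trans (hB₃ x hx)
        (le_trans (le_trans (le_max_right _ _) (le_max_right _ _)) (le_max_right _ _))
    exact max_le e1 (max_le e2 e3)

section Exist

variable {E : Type*} [NormedAddCommGroup E] [NormedSpace ℝ E] [CompleteSpace E]

/-- Global existence for a bounded globally Lipschitz autonomous vector field. -/
lemma global_exists {v : E → E} {K : NNReal} (hlip : LipschitzWith K v)
    {C : ℝ} (hC : ∀ x, ‖v x‖ ≤ C) (x₀ : E) :
    ∃ f : ℝ → E, f 0 = x₀ ∧ ∀ t : ℝ, HasDerivAt f (v (f t)) t := by
  have hC0 : 0 ≤ C := le_trans (norm_nonneg _) (hC x₀)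
  have hpl : ∀ n : ℕ, IsPicardLindelof (fun _ : ℝ => v) (tmin := -((n:ℝ)+1)) (tmax := (n:ℝ)+1)
      ⟨0, by constructor <;> linarith [Nat.cast_nonneg (α := ℝ) n]⟩
      x₀ (C.toNNReal * ((n:NNReal)+1) + 1) 0 C.toNNReal K := by
    intro n
    have hn : (0:ℝ) ≤ (n:ℝ) := Nat.cast_nonneg n
    refine IsPicardLindelof.of_time_independent
      (fun x _ => (hC x).trans (Real.le_coe_toNNReal C)) hlip.lipschitzOnWith ?_
    simp only [NNReal.coe_add, NNReal.coe_mul, NNReal.coe_natCast, NNReal.coe_one,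
      NNReal.coe_zero, Real.coe_toNNReal _ hC0, sub_zero, zero_sub, neg_neg, max_self]
    nlinarith
  choose F hF0 hFd using fun n : ℕ => (hpl n).exists_eq_forall_mem_Icc_hasDerivWithinAt₀
  have hF0 : ∀ n : ℕ, F n 0 = x₀ := hF0
  -- each F n has an honest derivative in the open interval
  have hFD : ∀ n : ℕ, ∀ t : ℝ, |t| < (n:ℝ) + 1 → HasDerivAt (F n) (v (F n t)) t := by
    intro n t ht
    rw [abs_lt] at ht
    exact (hFd n t ⟨by linarith, by linarith⟩).hasDerivAt
      (Icc_mem_nhds (by linarith) (by linarith))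
  -- solutions agree on common intervals
  have hEq : ∀ n m : ℕ, n ≤ m → ∀ t : ℝ, |t| ≤ (n:ℝ) + 1 → F n t = F m t := by
    intro n m hnm t ht
    have hmono : ((n:ℝ)+1) ≤ (m:ℝ)+1 := by
      have : (n:ℝ) ≤ (m:ℝ) := Nat.cast_le.mpr hnm; linarith
    have h0 : (0:ℝ) ∈ Ioo (-((n:ℝ)+1)) ((n:ℝ)+1) := by
      constructor <;> [linarith [Nat.cast_nonneg (α := ℝ) n]; linarith [Nat.cast_nonneg (α := ℝ) n]]
    have key := ODE_solution_unique_of_mem_Icc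
      (v := fun _ : ℝ => v) (s := fun _ => Set.univ)
      (fun _ _ => hlip.lipschitzOnWith) h0
      (fun x hx => ((hFd n x hx).continuousWithinAt))
      (fun x hx => by
        refine hFD n x ?_
        rw [abs_lt]; exact ⟨by linarith [hx.1], by linarith [hx.2]⟩)
      (fun _ _ => trivial)
      (fun x hx => ((hFd m x ⟨by linarith [hx.1], by linarith [hx.2]⟩).continuousWithinAt).mono
        (Icc_subset_Icc (by linarith) hmono))
      (fun x hx => by
        refine hFD m x ?_
        rw [abs_lt]
        exact ⟨by linarith [hx.1, hmono], by linarith [hx.2, hmono]⟩)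
      (fun _ _ => trivial)
      (by rw [hF0 n, hF0 m])
    refine key ?_
    rw [abs_le] at ht
    exact ⟨by linarith [ht.1], by linarith [ht.2]⟩
  refine ⟨fun t => F ⌈|t|⌉₊ t, by simpa using hF0 0, fun t => ?_⟩
  set N : ℕ := ⌈|t|⌉₊ + 1 with hN
  have hfN : ∀ s : ℝ, |s| < (N:ℝ) → F ⌈|s|⌉₊ s = F N s := by
    intro s hs
    refine hEq ⌈|s|⌉₊ N (Nat.ceil_le.2 hs.le) s ?_
    linarith [Nat.le_ceil |s|]
  have htN : |t| < (N:ℝ) := by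
    have h1 := Nat.le_ceil |t|
    have h2 : ((⌈|t|⌉₊ : ℕ) : ℝ) < ((N:ℕ) : ℝ) := by exact_mod_cast Nat.lt_succ_self _
    linarith
  have hU : {s : ℝ | |s| < (N:ℝ)} ∈ nhds t := by
    have : IsOpen {s : ℝ | |s| < (N:ℝ)} := isOpen_lt (continuous_abs) continuous_const
    exact this.mem_nhds htN
  have hev : (fun s => F ⌈|s|⌉₊ s) =ᶠ[nhds t] F N :=
    Filter.eventually_of_mem hU fun s hs => hfN s hs
  have hd : HasDerivAt (F N) (v (F N t)) t := by
    refine hFD N t ?_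
    have : (0:ℝ) < 1 := one_pos
    linarith
  have := hd.congr_of_eventuallyEq hev
  rwa [← hfN t htN] at this

end Exist

section Invariant

/-- If `g 0 ≥ 0` and `g' t ≥ 0` whenever `t ≥ 0` and `g t ≤ 0`, then `g ≥ 0` on `[0, ∞)`. -/
lemma nonneg_invariant {g g' : ℝ → ℝ} (hd : ∀ t : ℝ, HasDerivAt g (g' t) t)
    (h0 : 0 ≤ g 0) (hkey : ∀ t : ℝ, 0 ≤ t → g t ≤ 0 → 0 ≤ g' t) :
    ∀ t : ℝ, 0 ≤ t → 0 ≤ g t := by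
  intro t1 ht1
  by_contra hneg
  push_neg at hneg
  have hgc : Continuous g := by
    have : Differentiable ℝ g := fun t => (hd t).differentiableAt
    exact this.continuous
  set S : Set ℝ := Icc 0 t1 ∩ {t | 0 ≤ g t} with hS
  have hSne : S.Nonempty := ⟨0, ⟨le_rfl, ht1⟩, h0⟩
  have hSc : IsClosed S := isClosed_Icc.inter (isClosed_le continuous_const hgc)
  have hSb : BddAbove S := (bddAbove_Icc (a := 0) (b := t1)).mono inter_subset_left
  set c : ℝ := sSup S with hc
  have hcS : c ∈ S := hSc.csSup_mem hSne hSb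
  have hc1 : c ≤ t1 := csSup_le hSne fun x hx => hx.1.2
  have hclt : c < t1 := by
    rcases eq_or_lt_of_le hc1 with h | h
    · exact absurd (h ▸ hcS.2) (not_le.2 hneg)
    · exact h
  have hlt : ∀ x ∈ Ioo c t1, g x < 0 := by
    intro x hx
    by_contra h
    push_neg at h
    have hxS : x ∈ S := ⟨⟨le_trans hcS.1.1 hx.1.le, hx.2.le⟩, h⟩
    exact absurd (le_csSup hSb hxS) (not_le.2 hx.1)
  have hmono : MonotoneOn g (Icc c t1) := by
    apply monotoneOn_of_deriv_nonneg (convex_Icc c t1) hgc.continuousOn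
    · exact fun x _ => (hd x).differentiableAt.differentiableWithinAt
    · intro x hx
      rw [interior_Icc] at hx
      rw [(hd x).deriv]
      exact hkey x (le_trans hcS.1.1 hx.1.le) (hlt x hx).le
  have := hmono ⟨le_rfl, hclt.le⟩ ⟨hclt.le, le_rfl⟩ hclt.le
  have h2 : (0:ℝ) ≤ g c := hcS.2
  linarith

end Invariant

lemma cl_sum {a b c : ℝ} (h : 1 ≤ a + b + c) : 1 ≤ cl a + cl b + cl c := by
  rcases le_or_gt a 1 with ha | ha
  · rcases le_or_gt b 1 with hb | hb
    · rcases le_or_gt c 1 with hc | hc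
      · linarith [le_cl ha, le_cl hb, le_cl hc]
      · rw [cl_of_gt_one hc]; linarith [cl_nonneg a, cl_nonneg b]
    · rw [cl_of_gt_one hb]; linarith [cl_nonneg a, cl_nonneg c]
  · rw [cl_of_gt_one ha]; linarith [cl_nonneg b, cl_nonneg c]

section Comp

variable {F G : Type*} [NormedAddCommGroup F] [NormedSpace ℝ F]
  [NormedAddCommGroup G] [NormedSpace ℝ G]

lemma _root_.HasDerivAt.fst' {f : ℝ → F × G} {d : F × G} {t : ℝ}
    (h : HasDerivAt f d t) : HasDerivAt (fun s => (f s).1) d.1 t :=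
  (ContinuousLinearMap.fst ℝ F G).hasFDerivAt.comp_hasDerivAt t h

lemma _root_.HasDerivAt.snd' {f : ℝ → F × G} {d : F × G} {t : ℝ}
    (h : HasDerivAt f d t) : HasDerivAt (fun s => (f s).2) d.2 t :=
  (ContinuousLinearMap.snd ℝ F G).hasFDerivAt.comp_hasDerivAt t h

end Comp

end THM

open THM Set Metric

/-- Well-posedness (existence, uniqueness, global nonnegative bounded solution)
for the spatially homogeneous tumor–host–matrix system. -/
theorem tumor_host_matrix_wellposedness
    (γT γH μT μH HT HH HM : ℝ → ℝ)
    (δT δH δT' δH' νT νH ψT ψH ψM mT mH : ℝ)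
    (hψT : ψT ∈ Set.Icc (0:ℝ) 1) (hψH : ψH ∈ Set.Icc (0:ℝ) 1)
    (hψM : ψM ∈ Set.Icc (0:ℝ) 1)
    (hmT : mT ∈ Set.Icc (0:ℝ) 1) (hmH : mH ∈ Set.Icc (0:ℝ) 1)
    (hδT : 0 < δT) (hδH : 0 < δH) (hδT' : 0 < δT') (hδH' : 0 < δH')
    (hνT : 0 < νT) (hνH : 0 < νH)
    (hγnn : ∀ s ∈ Set.Icc (0:ℝ) 1, 0 ≤ γT s ∧ 0 ≤ γH s ∧ 0 ≤ μT s ∧ 0 ≤ μH s)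
    (hγT0 : γT 0 = 0) (hγH0 : γH 0 = 0)
    (hγTmono : MonotoneOn γT (Set.Icc 0 1)) (hγHmono : MonotoneOn γH (Set.Icc 0 1))
    (hμTanti : AntitoneOn μT (Set.Icc 0 1)) (hμHanti : AntitoneOn μH (Set.Icc 0 1))
    (hLipγ : ∃ L : NNReal, LipschitzWith L γT ∧ LipschitzWith L γH ∧
      LipschitzWith L μT ∧ LipschitzWith L μH)
    (hLipH : ∃ L : NNReal, LipschitzWith L HT ∧ LipschitzWith L HH ∧ LipschitzWith L HM)
    (hHrange : ∀ s, HT s ∈ Set.Icc (0:ℝ) 1 ∧ HH s ∈ Set.Icc (0:ℝ) 1 ∧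
      HM s ∈ Set.Icc (0:ℝ) 1)
    (hHvanish : ∀ s ≤ (0:ℝ), HT s = 0 ∧ HH s = 0 ∧ HM s = 0)
    -- initial datum: φ⁰ ≥ 0 with ‖φ⁰‖₁ ≤ 1
    (φT0 φH0 φM0 : ℝ)
    (hinit : 0 ≤ φT0 ∧ 0 ≤ φH0 ∧ 0 ≤ φM0 ∧ φT0 + φH0 + φM0 ≤ 1) :
    ∃ φT φH φM : ℝ → ℝ,
      -- existence of a global solution attaining the initial datum
      (φT 0 = φT0 ∧ φH 0 = φH0 ∧ φM 0 = φM0) ∧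
      (∀ t : ℝ, 0 ≤ t →
        HasDerivWithinAt φT
          ((γT (φM t) * HT (ψT - (φT t + φH t + φM t)) - δT -
            δT' * HM (mT - φM t)) * φT t) (Set.Ici 0) t ∧
        HasDerivWithinAt φH
          ((γH (φM t) * HH (ψH - (φT t + φH t + φM t)) - δH -
            δH' * HM (mH - φM t)) * φH t) (Set.Ici 0) t ∧
        HasDerivWithinAt φM
          ((μT (φM t) * HM (ψM - (φT t + φH t + φM t)) - νT * φM t) * φT t +
           (μH (φM t) * HM (ψM - (φT t + φH t + φM t)) - νH * φM t) * φH t)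
          (Set.Ici 0) t) ∧
      -- the solution is nonnegative with ‖φ(t)‖₁ ≤ 1 (hence continuous on [0,∞))
      (∀ t : ℝ, 0 ≤ t →
        0 ≤ φT t ∧ 0 ≤ φH t ∧ 0 ≤ φM t ∧ φT t + φH t + φM t ≤ 1) ∧
      -- uniqueness among all such solutions
      (∀ χT χH χM : ℝ → ℝ,
        (χT 0 = φT0 ∧ χH 0 = φH0 ∧ χM 0 = φM0) →
        (∀ t : ℝ, 0 ≤ t →
          HasDerivWithinAt χT
            ((γT (χM t) * HT (ψT - (χT t + χH t + χM t)) - δT -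
              δT' * HM (mT - χM t)) * χT t) (Set.Ici 0) t ∧
          HasDerivWithinAt χH
            ((γH (χM t) * HH (ψH - (χT t + χH t + χM t)) - δH -
              δH' * HM (mH - χM t)) * χH t) (Set.Ici 0) t ∧
          HasDerivWithinAt χM
            ((μT (χM t) * HM (ψM - (χT t + χH t + χM t)) - νT * χM t) * χT t +
             (μH (χM t) * HM (ψM - (χT t + χH t + χM t)) - νH * χM t) * χH t)
            (Set.Ici 0) t) →
        ∀ t : ℝ, 0 ≤ t → χT t = φT t ∧ χH t = φH t ∧ χM t = φM t) := by
  classical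
  obtain ⟨Lγ, hLγT, hLγH, hLμT, hLμH⟩ := hLipγ
  obtain ⟨LHc, hLHT, hLHH, hLHM⟩ := hLipH
  obtain ⟨hT0, hH0, hM0, hsum0⟩ := hinit
  -- the clamped (globally Lipschitz, bounded) vector field
  set vT : E3 → ℝ := fun p =>
    (γT (cl p.2.2) * HT (ψT - (cl p.1 + cl p.2.1 + cl p.2.2)) - δT -
      δT' * HM (mT - cl p.2.2)) * cl p.1 with hvTdef
  set vH : E3 → ℝ := fun p =>
    (γH (cl p.2.2) * HH (ψH - (cl p.1 + cl p.2.1 + cl p.2.2)) - δH -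
      δH' * HM (mH - cl p.2.2)) * cl p.2.1 with hvHdef
  set vM : E3 → ℝ := fun p =>
    (μT (cl p.2.2) * HM (ψM - (cl p.1 + cl p.2.1 + cl p.2.2)) - νT * cl p.2.2) * cl p.1 +
    (μH (cl p.2.2) * HM (ψM - (cl p.1 + cl p.2.1 + cl p.2.2)) - νH * cl p.2.2) * cl p.2.1
    with hvMdef
  set v : E3 → E3 := fun p => (vT p, vH p, vM p) with hvdef
  -- Lipschitz/bound data for the clamped field
  have lsum : LipBOn Set.univ (fun p : E3 => cl p.1 + cl p.2.1 + cl p.2.2) :=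
    ((lipBOn_cl1 _).add (lipBOn_cl2 _)).add (lipBOn_cl3 _)
  have lHT : LipBOn Set.univ (fun p : E3 => HT (ψT - (cl p.1 + cl p.2.1 + cl p.2.2))) :=
    LipBOn.comp hLHT ((LipBOn.const _ ψT).sub lsum)
  have lHH : LipBOn Set.univ (fun p : E3 => HH (ψH - (cl p.1 + cl p.2.1 + cl p.2.2))) :=
    LipBOn.comp hLHH ((LipBOn.const _ ψH).sub lsum)
  have lHMs : LipBOn Set.univ (fun p : E3 => HM (ψM - (cl p.1 + cl p.2.1 + cl p.2.2))) :=
    LipBOn.comp hLHM ((LipBOn.const _ ψM).sub lsum)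
  have lHMT : LipBOn Set.univ (fun p : E3 => HM (mT - cl p.2.2)) :=
    LipBOn.comp hLHM ((LipBOn.const _ mT).sub (lipBOn_cl3 _))
  have lHMH : LipBOn Set.univ (fun p : E3 => HM (mH - cl p.2.2)) :=
    LipBOn.comp hLHM ((LipBOn.const _ mH).sub (lipBOn_cl3 _))
  have lγT : LipBOn Set.univ (fun p : E3 => γT (cl p.2.2)) := LipBOn.comp hLγT (lipBOn_cl3 _)
  have lγH : LipBOn Set.univ (fun p : E3 => γH (cl p.2.2)) := LipBOn.comp hLγH (lipBOn_cl3 _)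
  have lμT : LipBOn Set.univ (fun p : E3 => μT (cl p.2.2)) := LipBOn.comp hLμT (lipBOn_cl3 _)
  have lμH : LipBOn Set.univ (fun p : E3 => μH (cl p.2.2)) := LipBOn.comp hLμH (lipBOn_cl3 _)
  have lvT : LipBOn Set.univ vT :=
    (((lγT.mul lHT).sub (LipBOn.const _ δT)).sub
      ((LipBOn.const _ δT').mul lHMT)).mul (lipBOn_cl1 _)
  have lvH : LipBOn Set.univ vH :=
    (((lγH.mul lHH).sub (LipBOn.const _ δH)).sub
      ((LipBOn.const _ δH').mul lHMH)).mul (lipBOn_cl2 _)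
  have lvM : LipBOn Set.univ vM :=
    (((lμT.mul lHMs).sub ((LipBOn.const _ νT).mul (lipBOn_cl3 _))).mul (lipBOn_cl1 _)).add
      (((lμH.mul lHMs).sub ((LipBOn.const _ νH).mul (lipBOn_cl3 _))).mul (lipBOn_cl2 _))
  obtain ⟨Kv, Cv, hCv0, hKv, hCv⟩ := lipschitzOnWith_prod lvT lvH lvM
  have hlipv : LipschitzWith Kv v := lipschitzOnWith_univ.1 hKv
  have hCv' : ∀ x : E3, ‖v x‖ ≤ Cv := fun x => hCv x trivial
  obtain ⟨f, hf0, hfd⟩ := global_exists hlipv hCv' ((φT0, φH0, φM0) : E3)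
  -- component derivatives
  have hdT : ∀ t : ℝ, HasDerivAt (fun s => (f s).1) (vT (f t)) t := fun t => (hfd t).fst'
  have hdH : ∀ t : ℝ, HasDerivAt (fun s => (f s).2.1) (vH (f t)) t :=
    fun t => (hfd t).snd'.fst'
  have hdM : ∀ t : ℝ, HasDerivAt (fun s => (f s).2.2) (vM (f t)) t :=
    fun t => (hfd t).snd'.snd'
  -- nonnegativity of the three components on [0, ∞)
  have hnT : ∀ t : ℝ, 0 ≤ t → 0 ≤ (f t).1 := by
    refine nonneg_invariant hdT (by show 0 ≤ (f 0).1; rw [hf0]; exact hT0) ?_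
    intro t _ hle
    have h0 : cl ((f t).1) = 0 := cl_of_nonpos hle
    simp only [hvTdef]
    rw [h0, mul_zero]
  have hnH : ∀ t : ℝ, 0 ≤ t → 0 ≤ (f t).2.1 := by
    refine nonneg_invariant hdH (by show 0 ≤ (f 0).2.1; rw [hf0]; exact hH0) ?_
    intro t _ hle
    have h0 : cl ((f t).2.1) = 0 := cl_of_nonpos hle
    simp only [hvHdef]
    rw [h0, mul_zero]
  have hnM : ∀ t : ℝ, 0 ≤ t → 0 ≤ (f t).2.2 := by
    refine nonneg_invariant hdM (by show 0 ≤ (f 0).2.2; rw [hf0]; exact hM0) ?_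
    intro t _ hle
    have h0 : cl ((f t).2.2) = 0 := cl_of_nonpos hle
    have hμT0 := (hγnn 0 ⟨le_rfl, zero_le_one⟩).2.2.1
    have hμH0 := (hγnn 0 ⟨le_rfl, zero_le_one⟩).2.2.2
    simp only [hvMdef]
    rw [h0]
    have hHM1 := (hHrange (ψM - (cl (f t).1 + cl (f t).2.1 + 0))).2.2.1
    have e1 : 0 ≤ cl (f t).1 := cl_nonneg _
    have e2 : 0 ≤ cl (f t).2.1 := cl_nonneg _
    nlinarith [mul_nonneg (mul_nonneg hμT0 hHM1) e1, mul_nonneg (mul_nonneg hμH0 hHM1) e2]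
  -- the total volume fraction stays below 1
  have hnS : ∀ t : ℝ, 0 ≤ t → (f t).1 + (f t).2.1 + (f t).2.2 ≤ 1 := by
    have key : ∀ t : ℝ, 0 ≤ t →
        1 - ((f t).1 + (f t).2.1 + (f t).2.2) ≤ 0 →
        0 ≤ -(vT (f t) + vH (f t) + vM (f t)) := by
      intro t _ hle
      set c1 := cl (f t).1
      set c2 := cl (f t).2.1
      set c3 := cl (f t).2.2
      have hσ : 1 ≤ (f t).1 + (f t).2.1 + (f t).2.2 := by linarith
      have hcl1 : 1 ≤ c1 + c2 + c3 := cl_sum hσ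
      have eT : HT (ψT - (c1 + c2 + c3)) = 0 := (hHvanish _ (by linarith [hψT.2])).1
      have eH : HH (ψH - (c1 + c2 + c3)) = 0 := (hHvanish _ (by linarith [hψH.2])).2.1
      have eM : HM (ψM - (c1 + c2 + c3)) = 0 := (hHvanish _ (by linarith [hψM.2])).2.2
      have hHMT := (hHrange (mT - c3)).2.2.1
      have hHMH := (hHrange (mH - c3)).2.2.1
      have e1 : 0 ≤ c1 := cl_nonneg _
      have e2 : 0 ≤ c2 := cl_nonneg _
      have e3 : 0 ≤ c3 := cl_nonneg _
      simp only [hvTdef, hvHdef, hvMdef]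
      rw [eT, eH, eM]
      nlinarith [mul_nonneg hδT.le e1, mul_nonneg (mul_nonneg hδT'.le hHMT) e1,
        mul_nonneg hδH.le e2, mul_nonneg (mul_nonneg hδH'.le hHMH) e2,
        mul_nonneg (mul_nonneg hνT.le e3) e1, mul_nonneg (mul_nonneg hνH.le e3) e2]
    have := nonneg_invariant
      (g := fun t => 1 - ((f t).1 + (f t).2.1 + (f t).2.2))
      (g' := fun t => -(vT (f t) + vH (f t) + vM (f t)))
      (fun t => (((hdT t).add (hdH t)).add (hdM t)).const_sub 1)
      (by show 0 ≤ 1 - ((f 0).1 + (f 0).2.1 + (f 0).2.2); rw [hf0]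
          show (0:ℝ) ≤ 1 - (φT0 + φH0 + φM0); linarith) key
    intro t ht
    have h2 : 0 ≤ 1 - ((f t).1 + (f t).2.1 + (f t).2.2) := this t ht
    linarith
  -- on [0, ∞) the clamps are the identity
  have hcl1 : ∀ t : ℝ, 0 ≤ t → cl (f t).1 = (f t).1 := fun t ht =>
    cl_of_mem (hnT t ht) (by linarith [hnS t ht, hnH t ht, hnM t ht])
  have hcl2 : ∀ t : ℝ, 0 ≤ t → cl (f t).2.1 = (f t).2.1 := fun t ht =>
    cl_of_mem (hnH t ht) (by linarith [hnS t ht, hnT t ht, hnM t ht])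
  have hcl3 : ∀ t : ℝ, 0 ≤ t → cl (f t).2.2 = (f t).2.2 := fun t ht =>
    cl_of_mem (hnM t ht) (by linarith [hnS t ht, hnT t ht, hnH t ht])
  refine ⟨fun t => (f t).1, fun t => (f t).2.1, fun t => (f t).2.2,
    ⟨by show (f 0).1 = φT0; rw [hf0], by show (f 0).2.1 = φH0; rw [hf0],
      by show (f 0).2.2 = φM0; rw [hf0]⟩, ?_, ?_, ?_⟩
  · intro t ht
    refine ⟨?_, ?_, ?_⟩
    · have h := (hdT t).hasDerivWithinAt (s := Set.Ici 0)
      have e : vT (f t) = (γT ((f t).2.2) * HT (ψT - ((f t).1 + (f t).2.1 + (f t).2.2)) - δT -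
          δT' * HM (mT - (f t).2.2)) * (f t).1 := by
        simp only [hvTdef]
        rw [hcl1 t ht, hcl2 t ht, hcl3 t ht]
      rwa [e] at h
    · have h := (hdH t).hasDerivWithinAt (s := Set.Ici 0)
      have e : vH (f t) = (γH ((f t).2.2) * HH (ψH - ((f t).1 + (f t).2.1 + (f t).2.2)) - δH -
          δH' * HM (mH - (f t).2.2)) * (f t).2.1 := by
        simp only [hvHdef]
        rw [hcl1 t ht, hcl2 t ht, hcl3 t ht]
      rwa [e] at h
    · have h := (hdM t).hasDerivWithinAt (s := Set.Ici 0)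
      have e : vM (f t) =
          (μT ((f t).2.2) * HM (ψM - ((f t).1 + (f t).2.1 + (f t).2.2)) - νT * (f t).2.2) *
            (f t).1 +
          (μH ((f t).2.2) * HM (ψM - ((f t).1 + (f t).2.1 + (f t).2.2)) - νH * (f t).2.2) *
            (f t).2.1 := by
        simp only [hvMdef]
        rw [hcl1 t ht, hcl2 t ht, hcl3 t ht]
      rwa [e] at h
  · exact fun t ht => ⟨hnT t ht, hnH t ht, hnM t ht, hnS t ht⟩
  · -- uniqueness
    intro χT χH χM hχ0 hχd
    -- the original (unclamped) vector field
    set wT : E3 → ℝ := fun p =>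
      (γT p.2.2 * HT (ψT - (p.1 + p.2.1 + p.2.2)) - δT - δT' * HM (mT - p.2.2)) * p.1
      with hwTdef
    set wH : E3 → ℝ := fun p =>
      (γH p.2.2 * HH (ψH - (p.1 + p.2.1 + p.2.2)) - δH - δH' * HM (mH - p.2.2)) * p.2.1
      with hwHdef
    set wM : E3 → ℝ := fun p =>
      (μT p.2.2 * HM (ψM - (p.1 + p.2.1 + p.2.2)) - νT * p.2.2) * p.1 +
      (μH p.2.2 * HM (ψM - (p.1 + p.2.1 + p.2.2)) - νH * p.2.2) * p.2.1 with hwMdef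
    set w : E3 → E3 := fun p => (wT p, wH p, wM p) with hwdef
    -- the unclamped field is Lipschitz on every unit ball
    have hwlip : ∀ c : E3, ∃ K : NNReal, LipschitzOnWith K w (closedBall c 1) := by
      intro c
      have l1 := lipBOn_fst c 1
      have l2 := lipBOn_snd1 c 1
      have l3 := lipBOn_snd2 c 1
      have lsum' : LipBOn (closedBall c 1) (fun p : E3 => p.1 + p.2.1 + p.2.2) :=
        (l1.add l2).add l3
      have lwT : LipBOn (closedBall c 1) wT :=
        ((((LipBOn.comp hLγT l3).mul (LipBOn.comp hLHT ((LipBOn.const _ ψT).sub lsum'))).sub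
            (LipBOn.const _ δT)).sub
          ((LipBOn.const _ δT').mul (LipBOn.comp hLHM ((LipBOn.const _ mT).sub l3)))).mul l1
      have lwH : LipBOn (closedBall c 1) wH :=
        ((((LipBOn.comp hLγH l3).mul (LipBOn.comp hLHH ((LipBOn.const _ ψH).sub lsum'))).sub
            (LipBOn.const _ δH)).sub
          ((LipBOn.const _ δH').mul (LipBOn.comp hLHM ((LipBOn.const _ mH).sub l3)))).mul l2
      have lwM : LipBOn (closedBall c 1) wM :=
        ((((LipBOn.comp hLμT l3).mul (LipBOn.comp hLHM ((LipBOn.const _ ψM).sub lsum'))).sub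
            ((LipBOn.const _ νT).mul l3)).mul l1).add
          ((((LipBOn.comp hLμH l3).mul
              (LipBOn.comp hLHM ((LipBOn.const _ ψM).sub lsum'))).sub
            ((LipBOn.const _ νH).mul l3)).mul l2)
      obtain ⟨K, C, _, hK, _⟩ := lipschitzOnWith_prod lwT lwH lwM
      exact ⟨K, hK⟩
    set g : ℝ → E3 := fun t => (χT t, χH t, χM t) with hgdef
    have hg0 : g 0 = f 0 := by
      rw [hf0]
      show (χT 0, χH 0, χM 0) = (φT0, φH0, φM0)
      rw [hχ0.1, hχ0.2.1, hχ0.2.2]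
    have hgd : ∀ t : ℝ, 0 ≤ t → HasDerivWithinAt g (w (g t)) (Set.Ici 0) t := by
      intro t ht
      obtain ⟨h1, h2, h3⟩ := hχd t ht
      exact h1.prodMk (h2.prodMk h3)
    have hfw : ∀ t : ℝ, 0 ≤ t → v (f t) = w (f t) := by
      intro t ht
      show (vT (f t), vH (f t), vM (f t)) = (wT (f t), wH (f t), wM (f t))
      have e1 : vT (f t) = wT (f t) := by
        simp only [hvTdef, hwTdef]; rw [hcl1 t ht, hcl2 t ht, hcl3 t ht]
      have e2 : vH (f t) = wH (f t) := by
        simp only [hvHdef, hwHdef]; rw [hcl1 t ht, hcl2 t ht, hcl3 t ht]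
      have e3 : vM (f t) = wM (f t) := by
        simp only [hvMdef, hwMdef]; rw [hcl1 t ht, hcl2 t ht, hcl3 t ht]
      rw [e1, e2, e3]
    have hfc : Continuous f := by
      have hdf : Differentiable ℝ f := fun t => (hfd t).differentiableAt
      exact hdf.continuous
    have hgc : ∀ s : ℝ, 0 ≤ s → ContinuousWithinAt g (Set.Ici (0:ℝ)) s :=
      fun s hs => (hgd s hs).continuousWithinAt
    have main : ∀ T : ℝ, 0 ≤ T → ∀ s ∈ Set.Icc (0:ℝ) T, g s = f s := by
      intro T hT
      set B : Set ℝ := {t | t ∈ Set.Icc (0:ℝ) T ∧ ∀ s ∈ Set.Icc (0:ℝ) t, g s = f s}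
        with hBdef
      have hB0 : (0:ℝ) ∈ B := by
        refine ⟨⟨le_rfl, hT⟩, fun s hs => ?_⟩
        have : s = 0 := le_antisymm hs.2 hs.1
        rw [this, hg0]
      have hBne : B.Nonempty := ⟨0, hB0⟩
      have hBb : BddAbove B := ⟨T, fun x hx => hx.1.2⟩
      set c : ℝ := sSup B with hcdef
      have hc0 : 0 ≤ c := le_csSup hBb hB0
      have hcT : c ≤ T := csSup_le hBne fun x hx => hx.1.2
      have hpre : ∀ s : ℝ, 0 ≤ s → s < c → g s = f s := by
        intro s hs0 hsc
        obtain ⟨b, hbB, hsb⟩ := exists_lt_of_lt_csSup hBne hsc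
        exact hbB.2 s ⟨hs0, hsb.le⟩
      have hgcf : g c = f c := by
        rcases eq_or_lt_of_le hc0 with h0 | h0
        · rw [← h0]; exact hg0
        · have hne : (nhdsWithin c (Set.Ico (0:ℝ) c)).NeBot := by
            rw [← mem_closure_iff_nhdsWithin_neBot, closure_Ico h0.ne]
            exact ⟨hc0, le_rfl⟩
          haveI := hne
          have tg : Filter.Tendsto g (nhdsWithin c (Set.Ico (0:ℝ) c)) (nhds (g c)) :=
            (hgc c hc0).mono fun x hx => hx.1
          have tf : Filter.Tendsto f (nhdsWithin c (Set.Ico (0:ℝ) c)) (nhds (f c)) :=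
            hfc.continuousAt.continuousWithinAt
          have heq : g =ᶠ[nhdsWithin c (Set.Ico (0:ℝ) c)] f :=
            Filter.eventually_of_mem self_mem_nhdsWithin fun x hx => hpre x hx.1 hx.2
          have tf2 : Filter.Tendsto f (nhdsWithin c (Set.Ico (0:ℝ) c)) (nhds (g c)) :=
            Filter.Tendsto.congr' heq tg
          exact (tendsto_nhds_unique tf2 tf)
      have hcB : c ∈ B := by
        refine ⟨⟨hc0, hcT⟩, fun s hs => ?_⟩
        rcases lt_or_eq_of_le hs.2 with h | h
        · exact hpre s hs.1 h
        · rw [h]; exact hgcf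
      rcases eq_or_lt_of_le hcT with hceq | hclt
      · intro s hs
        exact hcB.2 s (by rw [hceq]; exact hs)
      · exfalso
        obtain ⟨Kw, hKw⟩ := hwlip (f c)
        obtain ⟨ε1, hε1, hball1⟩ := Metric.continuousAt_iff.1 hfc.continuousAt 1 one_pos
        have h2 : g ⁻¹' (ball (g c) 1) ∈ nhdsWithin c (Set.Ici (0:ℝ)) :=
          (hgc c hc0) (Metric.ball_mem_nhds _ one_pos)
        obtain ⟨ε2, hε2, hsub2⟩ := Metric.mem_nhdsWithin_iff.1 h2
        set ε : ℝ := min (min (ε1/2) (ε2/2)) (T - c) with hεdef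
        have hε : 0 < ε := lt_min (lt_min (half_pos hε1) (half_pos hε2)) (by linarith)
        have hεa : ε ≤ ε1/2 := le_trans (min_le_left _ _) (min_le_left _ _)
        have hεb : ε ≤ ε2/2 := le_trans (min_le_left _ _) (min_le_right _ _)
        have hεc : ε ≤ T - c := min_le_right _ _
        have hmemf : ∀ s ∈ Set.Icc c (c+ε), f s ∈ closedBall (f c) 1 := by
          intro s hs
          apply ball_subset_closedBall
          apply hball1
          rw [Real.dist_eq, abs_of_nonneg (by linarith [hs.1] : (0:ℝ) ≤ s - c)]
          linarith [hs.2]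
        have hmemg : ∀ s ∈ Set.Icc c (c+ε), g s ∈ closedBall (f c) 1 := by
          intro s hs
          have hmem : s ∈ ball c ε2 ∩ Set.Ici (0:ℝ) := by
            constructor
            · rw [mem_ball, Real.dist_eq, abs_of_nonneg (by linarith [hs.1] : (0:ℝ) ≤ s - c)]
              linarith [hs.2]
            · exact le_trans hc0 hs.1
          have := hsub2 hmem
          rw [Set.mem_preimage, hgcf] at this
          exact ball_subset_closedBall this
        have hloc := ODE_solution_unique_of_mem_Icc_right
          (v := fun _ : ℝ => w) (s := fun _ => closedBall (f c) 1) (K := Kw)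
          (fun _ _ => hKw)
          (fun s hs => ((hgc s (le_trans hc0 hs.1)).mono fun x hx =>
            le_trans hc0 hx.1 : ContinuousWithinAt g (Set.Icc c (c+ε)) s))
          (fun t ht => (hgd t (le_trans hc0 ht.1)).mono
            (Set.Ici_subset_Ici.2 (le_trans hc0 ht.1)))
          (fun t ht => hmemg t (Set.Ico_subset_Icc_self ht))
          (hfc.continuousOn)
          (fun t ht => by
            have hd := (hfd t).hasDerivWithinAt (s := Set.Ici t)
            rwa [hfw t (le_trans hc0 ht.1)] at hd)
          (fun t ht => hmemf t (Set.Ico_subset_Icc_self ht))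
          hgcf
        have hnew : c + ε ∈ B := by
          refine ⟨⟨by linarith, by linarith⟩, fun s hs => ?_⟩
          rcases le_or_gt s c with h | h
          · exact hcB.2 s ⟨hs.1, h⟩
          · exact hloc ⟨h.le, hs.2⟩
        have := le_csSup hBb hnew
        linarith
    intro t ht
    have hmain := main t ht t ⟨ht, le_rfl⟩
    exact ⟨congrArg Prod.fst hmain, congrArg (fun p : E3 => p.2.1) hmain,
      congrArg (fun p : E3 => p.2.2) hmain⟩
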